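/- Let L be the Lie algebra gr_*(PΣ_n^+) presented by generators B_{i,j}, 1 ≤ i < j ≤ n, and relations [B_{i,j}, B_{k,l}] = 0 (i,j,k,l distinct), [B_{i,j}, B_{i,k}] = 0 (i,j,k distinct), [B_{j,k}, B_{i,j} + B_{i,k}] = 0 (i,j,k distinct). Then the element B_n = Σ_{j=2}^n B_{1,j} commutes with every generator B_{s,n}, 1 ≤ s < n; i.e., B_n centralizes the subalgebra generated by {B_{1,n},...,B_{n-1,n}}. -/
import Mathlib


open Finset

/-- In the Lie algebra `gr₊(PΣₙ⁺)` of the upper triangular McCool group, presented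
by generators `B i j` (`i < j`) and the relations below, the element
`Bₙ = Σ_{j=2}^{n} B 1 j` commutes with every generator `B s n` of the last column,
hence centralizes the free subalgebra they generate.  (Indices run over
`Fin (n+2)`, so there are at least two generators and the last column is
`Fin.last (n+1)`.) -/
theorem mccool_Bn_centralizes_last_column (n : ℕ)
    (L : Type*) [LieRing L] [LieAlgebra ℤ L]
    (B : Fin (n + 2) → Fin (n + 2) → L)
    (h1 : ∀ i j k l : Fin (n + 2), i < j → k < l →
      i ≠ k → i ≠ l → j ≠ k → j ≠ l → ⁅B i j, B k l⁆ = 0)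
    (h2 : ∀ i j k : Fin (n + 2), i < j → i < k → j ≠ k → ⁅B i j, B i k⁆ = 0)
    (h3 : ∀ i j k : Fin (n + 2), i < j → j < k → ⁅B j k, B i j + B i k⁆ = 0) :
    ∀ s : Fin (n + 2), s < Fin.last (n + 1) →
      ⁅∑ j ∈ univ.filter (fun j : Fin (n + 2) => 0 < j), B 0 j,
        B s (Fin.last (n + 1))⁆ = 0 := by
  intro s hs
  set last : Fin (n + 2) := Fin.last (n + 1) with hlast
  have hlastpos : (0 : Fin (n + 2)) < last := by
    simp [hlast, Fin.lt_def, Fin.last]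
  have hsum := map_sum (AddMonoidHom.mk' (fun y => ⁅y, B s last⁆)
      fun a b => add_lie a b (B s last))
    (fun j => B 0 j) (univ.filter (fun j : Fin (n + 2) => 0 < j))
  simp only [AddMonoidHom.mk'_apply] at hsum
  rw [hsum]
  rcases eq_or_lt_of_le (Fin.zero_le s) with hs0 | hs0
  · -- s = 0
    apply Finset.sum_eq_zero
    intro j hj
    simp only [mem_filter] at hj
    rcases eq_or_ne j last with rfl | hjl
    · rw [← hs0]; exact lie_self _
    · rw [← hs0]
      exact h2 0 j last hj.2 hlastpos hjl
  · -- 0 < s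
    have hsl : s ≠ last := ne_of_lt hs
    have hsmem : s ∈ univ.filter (fun j : Fin (n + 2) => 0 < j) := by
      simp [hs0]
    have hlmem : last ∈ univ.filter (fun j : Fin (n + 2) => 0 < j) := by
      simp [hlastpos]
    rw [Finset.sum_eq_add_of_mem s last hsmem hlmem hsl ?_]
    · have := h3 0 s last hs0 hs
      have h := lie_skew (B s last) (B 0 s + B 0 last)
      rw [this] at h
      rw [← add_lie]
      rw [← neg_eq_zero, h]
    · intro j hj hjne
      obtain ⟨hjs, hjl⟩ := hjne
      simp only [mem_filter] at hj
      exact h1 0 j s last hj.2 hs (Fin.pos_iff_ne_zero.mp hs0).symm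
        (Fin.pos_iff_ne_zero.mp hlastpos).symm hjs hjl
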